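/- Let (X, d) be an uncountable compact metric space. Then there exists no reproducing kernel Hilbert space H on X such that C(X) ⊆ H, where C(X) denotes the space of continuous real-valued functions on X. -/

import Mathlib

private lemma greedy_signs {H : Type*} [NormedAddCommGroup H] [InnerProductSpace ℝ H]
    (v : ℕ → H) (N : ℕ) :
    ∃ ε : ℕ → ℝ, (∀ i, ε i = 1 ∨ ε i = -1) ∧
      ∑ i ∈ Finset.range N, ‖v i‖ ^ 2 ≤ ‖∑ i ∈ Finset.range N, ε i • v i‖ ^ 2 := by
  induction N with
  | zero => exact ⟨fun _ => 1, fun _ => Or.inl rfl, by simp⟩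
  | succ N ih =>
    obtain ⟨ε, hε, hsum⟩ := ih
    set w := ∑ i ∈ Finset.range N, ε i • v i with hw
    set s : ℝ := if 0 ≤ (inner ℝ w (v N) : ℝ) then 1 else -1 with hs
    have hs1 : s = 1 ∨ s = -1 := by
      rw [hs]; split
      · exact Or.inl rfl
      · exact Or.inr rfl
    have hpos : 0 ≤ s * (inner ℝ w (v N) : ℝ) := by
      rw [hs]; split
      · simpa
      · nlinarith [lt_of_not_ge (by assumption : ¬ (0:ℝ) ≤ (inner ℝ w (v N) : ℝ))]
    refine ⟨fun i => if i = N then s else ε i, ?_, ?_⟩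
    · intro i
      by_cases h : i = N
      · simpa [h] using hs1
      · simpa [h] using hε i
    · rw [Finset.sum_range_succ, Finset.sum_range_succ]
      have heq : ∑ i ∈ Finset.range N, (if i = N then s else ε i) • v i = w := by
        refine Finset.sum_congr rfl fun i hi => ?_
        rw [if_neg (Finset.mem_range.mp hi).ne]
      have hN : (fun i => if i = N then s else ε i) N = s := by simp
      rw [heq, hN]
      have hsn : ‖s‖ = 1 := by
        rcases hs1 with h | h <;> rw [h] <;> simp
      have expand : ‖w + s • v N‖ ^ 2 = ‖w‖ ^ 2 + 2 * (s * (inner ℝ w (v N) : ℝ)) + ‖v N‖ ^ 2 := by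
        rw [norm_add_sq_real, real_inner_smul_right, norm_smul, hsn, one_mul]
      nlinarith

theorem no_RKHS_containing_continuous_functions
    {X : Type*} [MetricSpace X] [CompactSpace X] (hX : ¬ Countable X)
    (H : Type*) [NormedAddCommGroup H] [InnerProductSpace ℝ H] [CompleteSpace H]
    (ι : H →ₗ[ℝ] (X → ℝ)) (hinj : Function.Injective ι)
    (heval : ∀ x : X, Continuous fun h : H => ι h x)
    (hsub : ∀ f : X → ℝ, Continuous f → f ∈ Set.range ι) : False := by
  classical
  -- The evaluation functionals on `H`.
  let E : X → (H →L[ℝ] ℝ) := fun x => ⟨(LinearMap.proj x).comp ι, heval x⟩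
  have hEapp : ∀ (x : X) (h : H), E x h = ι h x := fun _ _ => rfl
  -- The inclusion `C(X) → H`, as a linear map.
  choose T hT using fun f : C(X, ℝ) => hsub f f.continuous
  have hTadd : ∀ f g : C(X, ℝ), T (f + g) = T f + T g := by
    intro f g
    apply hinj
    rw [map_add, hT, hT, hT, ContinuousMap.coe_add]
  have hTsmul : ∀ (c : ℝ) (f : C(X, ℝ)), T (c • f) = c • T f := by
    intro c f
    apply hinj
    rw [map_smul, hT, hT, ContinuousMap.coe_smul]
  let Tl : C(X, ℝ) →ₗ[ℝ] H :=
    { toFun := T, map_add' := hTadd, map_smul' := hTsmul }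
  -- It is continuous by the closed graph theorem.
  have hTlcont : Continuous Tl := by
    apply Tl.continuous_of_seq_closed_graph
    intro u f h hu hTu
    apply hinj
    show ι h = ι (T f)
    rw [hT f]
    funext x
    have h1 : Filter.Tendsto (fun k => ι (T (u k)) x) Filter.atTop (nhds (ι h x)) :=
      ((heval x).tendsto h).comp hTu
    have h2 : Filter.Tendsto (fun k => (u k) x) Filter.atTop (nhds (f x)) :=
      ((ContinuousEvalConst.continuous_eval_const x).tendsto f).comp hu
    have heq : (fun k => ι (T (u k)) x) = fun k => (u k) x := by
      funext k; rw [hT]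
    rw [heq] at h1
    exact tendsto_nhds_unique h1 h2
  let Tc : C(X, ℝ) →L[ℝ] H := ⟨Tl, hTlcont⟩
  -- Some `A n = {x | ‖E x‖ ≤ n}` is infinite, since `X` is uncountable.
  let A : ℕ → Set X := fun n => {x | ‖E x‖ ≤ n}
  have hcover : (Set.univ : Set X) = ⋃ n, A n := by
    ext x
    simp only [Set.mem_univ, true_iff, Set.mem_iUnion]
    exact ⟨⌈‖E x‖⌉₊, show ‖E x‖ ≤ ((⌈‖E x‖⌉₊ : ℕ) : ℝ) from Nat.le_ceil _⟩
  have hex : ∃ n, ¬ (A n).Countable := by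
    by_contra hc
    push_neg at hc
    have : (Set.univ : Set X).Countable := by
      rw [hcover]; exact Set.countable_iUnion hc
    exact hX (Set.countable_univ_iff.mp this)
  obtain ⟨n, hn⟩ := hex
  have hinf : (A n).Infinite := fun hfin => hn hfin.countable
  have : Infinite (A n) := Set.infinite_coe_iff.mpr hinf
  -- A sequence of distinct points with bounded evaluation functionals.
  let z : ℕ → X := fun i => (Infinite.natEmbedding (A n) i : X)
  have hzA : ∀ i, ‖E (z i)‖ ≤ n := fun i => (Infinite.natEmbedding (A n) i).2
  have hzinj : Function.Injective z := fun i j hij =>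
    (Infinite.natEmbedding (A n)).injective (Subtype.ext hij)
  set N : ℕ := ⌈(n : ℝ) ^ 2 * ‖Tc‖ ^ 2⌉₊ + 2 with hNdef
  -- minimal pairwise distance among `z 0, ..., z (N-1)`
  let P : Finset (ℕ × ℕ) := (Finset.range N ×ˢ Finset.range N).filter (fun p => p.1 ≠ p.2)
  have hPne : P.Nonempty := by
    refine ⟨(0, 1), Finset.mem_filter.mpr ⟨Finset.mem_product.mpr ⟨?_, ?_⟩, by norm_num⟩⟩
    · exact Finset.mem_range.mpr (by rw [hNdef]; omega)
    · exact Finset.mem_range.mpr (by rw [hNdef]; omega)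
  set r : ℝ := P.inf' hPne (fun p => dist (z p.1) (z p.2)) with hr
  have hrpos : 0 < r := by
    rw [hr, Finset.lt_inf'_iff]
    intro p hp
    have hne : p.1 ≠ p.2 := (Finset.mem_filter.mp hp).2
    exact dist_pos.mpr fun hzz => hne (hzinj hzz)
  have hrle : ∀ i j, i < N → j < N → i ≠ j → r ≤ dist (z i) (z j) := by
    intro i j hi hj hij
    have hmem : (i, j) ∈ P := Finset.mem_filter.mpr
      ⟨Finset.mem_product.mpr ⟨Finset.mem_range.mpr hi, Finset.mem_range.mpr hj⟩, hij⟩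
    rw [hr]
    exact Finset.inf'_le (f := fun p : ℕ × ℕ => dist (z p.1) (z p.2)) hmem
  -- bump functions
  let f : ℕ → C(X, ℝ) := fun i =>
    ⟨fun y => max 0 (1 - dist y (z i) / (r / 2)),
      continuous_const.max (continuous_const.sub
        ((continuous_id.dist continuous_const).div_const (r / 2)))⟩
  have hf1 : ∀ i, f i (z i) = 1 := by
    intro i; simp [f]
  have hf0 : ∀ i y, 0 ≤ f i y := fun i y => le_max_left _ _
  have hfle : ∀ i y, f i y ≤ 1 := by
    intro i y
    refine max_le zero_le_one ?_
    have : 0 ≤ dist y (z i) / (r / 2) := by positivity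
    linarith
  have hsupp : ∀ i y, f i y ≠ 0 → dist y (z i) < r / 2 := by
    intro i y hy
    by_contra hge
    push_neg at hge
    apply hy
    have : 1 - dist y (z i) / (r / 2) ≤ 0 := by
      have h2 : (0:ℝ) < r / 2 := by linarith
      have := (div_le_div_iff_of_pos_right h2).mpr hge
      rw [div_self h2.ne'] at this
      linarith [(one_le_div h2).mpr hge]
    exact max_eq_left this
  -- the signs from the greedy lemma
  obtain ⟨ε, hε, hsum⟩ := greedy_signs (fun i => Tc (f i)) N
  have hεabs : ∀ i, |ε i| = 1 := by
    intro i; rcases hε i with h | h <;> rw [h] <;> simp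
  set g : C(X, ℝ) := ∑ i ∈ Finset.range N, ε i • f i with hg
  -- `‖g‖ ≤ 1` since the bumps have disjoint supports
  have hgnorm : ‖g‖ ≤ 1 := by
    refine (ContinuousMap.norm_le _ zero_le_one).mpr fun y => ?_
    have hgy : g y = ∑ i ∈ Finset.range N, ε i * f i y := by
      rw [hg, ContinuousMap.sum_apply]
      simp
    rw [Real.norm_eq_abs, hgy]
    by_cases hey : ∃ j ∈ Finset.range N, f j y ≠ 0
    · obtain ⟨j, hjN, hjy⟩ := hey
      have hsingle : ∑ i ∈ Finset.range N, ε i * f i y = ε j * f j y := by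
        refine Finset.sum_eq_single_of_mem j hjN fun i hiN hij => ?_
        have hfzero : f i y = 0 := by
          by_contra hfi
          have d1 := hsupp i y hfi
          have d2 := hsupp j y hjy
          have : dist (z i) (z j) < r :=
            calc dist (z i) (z j) ≤ dist (z i) y + dist y (z j) := dist_triangle _ _ _
              _ < r := by rw [dist_comm (z i) y]; linarith
          exact absurd (hrle i j (Finset.mem_range.mp hiN) (Finset.mem_range.mp hjN) hij)
            (not_le.mpr this)
        rw [hfzero, mul_zero]
      rw [hsingle, abs_mul, hεabs j, one_mul, abs_of_nonneg (hf0 j y)]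
      exact hfle j y
    · push_neg at hey
      have : ∑ i ∈ Finset.range N, ε i * f i y = 0 := by
        refine Finset.sum_eq_zero fun i hi => ?_
        rw [hey i hi, mul_zero]
      rw [this]; norm_num
  -- hence the Bessel-type bound
  have hTg : Tc g = ∑ i ∈ Finset.range N, ε i • Tc (f i) := by
    rw [hg, map_sum]
    simp
  have hbound : ∑ i ∈ Finset.range N, ‖Tc (f i)‖ ^ 2 ≤ ‖Tc‖ ^ 2 := by
    calc ∑ i ∈ Finset.range N, ‖Tc (f i)‖ ^ 2
        ≤ ‖∑ i ∈ Finset.range N, ε i • Tc (f i)‖ ^ 2 := hsum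
      _ = ‖Tc g‖ ^ 2 := by rw [hTg]
      _ ≤ (‖Tc‖ * ‖g‖) ^ 2 := by
          have := Tc.le_opNorm g
          have h0 : (0:ℝ) ≤ ‖Tc g‖ := norm_nonneg _
          nlinarith [norm_nonneg (Tc g), norm_nonneg g, Tc.opNorm_nonneg]
      _ ≤ ‖Tc‖ ^ 2 := by
          have h0 : (0:ℝ) ≤ ‖Tc‖ := Tc.opNorm_nonneg
          have hg2 : ‖g‖ ^ 2 ≤ 1 := by nlinarith [norm_nonneg g]
          calc (‖Tc‖ * ‖g‖) ^ 2 = ‖Tc‖ ^ 2 * ‖g‖ ^ 2 := by ring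
            _ ≤ ‖Tc‖ ^ 2 * 1 := mul_le_mul_of_nonneg_left hg2 (sq_nonneg _)
            _ = ‖Tc‖ ^ 2 := mul_one _
  -- lower bound for each term
  have hnpos : 0 < (n : ℝ) := by
    have h1 : (1:ℝ) = f 0 (z 0) := (hf1 0).symm
    have h2 : f 0 (z 0) = ι (Tc (f 0)) (z 0) :=
      (congrFun (hT (f 0) : ι (Tc (f 0)) = ⇑(f 0)) (z 0)).symm
    have h3 : |ι (Tc (f 0)) (z 0)| ≤ ‖E (z 0)‖ * ‖Tc (f 0)‖ := by
      rw [← hEapp]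
      exact (E (z 0)).le_opNorm _
    by_contra hn0
    push_neg at hn0
    have : ‖E (z 0)‖ ≤ 0 := le_trans (hzA 0) hn0
    have : ‖E (z 0)‖ = 0 := le_antisymm this (norm_nonneg _)
    rw [this, zero_mul] at h3
    rw [← h2, ← h1] at h3
    norm_num at h3
  have hlower : ∀ i ∈ Finset.range N, ((n:ℝ)^2)⁻¹ ≤ ‖Tc (f i)‖ ^ 2 := by
    intro i _
    have h1 : (1:ℝ) = f i (z i) := (hf1 i).symm
    have h2 : f i (z i) = ι (Tc (f i)) (z i) :=
      (congrFun (hT (f i) : ι (Tc (f i)) = ⇑(f i)) (z i)).symm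
    have h3 : |ι (Tc (f i)) (z i)| ≤ ‖E (z i)‖ * ‖Tc (f i)‖ := by
      rw [← hEapp]
      exact (E (z i)).le_opNorm _
    have h4 : 1 ≤ (n:ℝ) * ‖Tc (f i)‖ := by
      have : |ι (Tc (f i)) (z i)| = 1 := by rw [← h2, ← h1]; norm_num
      rw [this] at h3
      exact h3.trans (mul_le_mul_of_nonneg_right (hzA i) (norm_nonneg _))
    rw [inv_le_iff_one_le_mul₀ (by positivity)]
    nlinarith [norm_nonneg (Tc (f i))]
  -- combine
  have hcard : (N : ℝ) * ((n:ℝ)^2)⁻¹ ≤ ∑ i ∈ Finset.range N, ‖Tc (f i)‖ ^ 2 := by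
    have := Finset.card_nsmul_le_sum (Finset.range N) (fun i => ‖Tc (f i)‖ ^ 2)
      (((n:ℝ)^2)⁻¹) hlower
    simpa [nsmul_eq_mul] using this
  have hfinal : (N : ℝ) ≤ (n:ℝ)^2 * ‖Tc‖^2 := by
    have h := hcard.trans hbound
    have hn2 : (0:ℝ) < (n:ℝ)^2 := by positivity
    rw [mul_inv_le_iff₀ hn2] at h
    linarith [h]
  have hceil : (n:ℝ)^2 * ‖Tc‖^2 ≤ (⌈(n : ℝ) ^ 2 * ‖Tc‖ ^ 2⌉₊ : ℝ) := Nat.le_ceil _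
  have : (N : ℝ) = (⌈(n : ℝ) ^ 2 * ‖Tc‖ ^ 2⌉₊ : ℝ) + 2 := by rw [hNdef]; push_cast; ring
  linarith
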